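/- Let A = [[1,1],[1,-1]] and B = [[1,1],[1,1]] as 2×2 complex matrices. Then ‖A‖₁ = 2√2, ‖B‖₁ = 2, |Aᵢⱼ| ≤ Bᵢⱼ entrywise, and for every n ≥ 1 the n-fold Kronecker tensor powers satisfy |A^{⊗n}_{ij}| ≤ B^{⊗n}_{ij} entrywise and ‖A^{⊗n}‖₁ = (2√2)^n = 2^{n/2} ‖B^{⊗n}‖₁. -/

import Mathlib

open scoped BigOperators Kronecker ComplexOrder Matrix

/-- The ℓ²→ℓ² operator norm of a square complex matrix. -/
noncomputable def opNorm {n : Type*} [Fintype n] [DecidableEq n] (A : Matrix n n ℂ) : ℝ :=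
  ‖Matrix.toEuclideanCLM (𝕜 := ℂ) A‖

/-- The trace norm (Schatten-1 norm) of a square complex matrix. -/
noncomputable def traceNorm {n : Type*} [Fintype n] [DecidableEq n] (A : Matrix n n ℂ) : ℝ :=
  (((Matrix.posSemidef_conjTranspose_mul_self A).1.eigenvectorUnitary * Matrix.diagonal ((fun x : ℝ => (x : ℂ)) ∘ Real.sqrt ∘ (Matrix.posSemidef_conjTranspose_mul_self A).1.eigenvalues) *
    (star (Matrix.posSemidef_conjTranspose_mul_self A).1.eigenvectorUnitary : Matrix n n ℂ)).trace).re

/-- The `n`-fold tensor (Kronecker) power of a square matrix, realized on `Fin n → Fin d`. -/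
noncomputable def tensorPow {d : ℕ} (A : Matrix (Fin d) (Fin d) ℂ) (n : ℕ) :
    Matrix (Fin n → Fin d) (Fin n → Fin d) ℂ :=
  Matrix.of fun x y => ∏ t, A (x t) (y t)

open scoped MatrixOrder in
lemma traceNorm_eq_of_sq {m : Type*} [Fintype m] [DecidableEq m] (A N : Matrix m m ℂ)
    (hN : N.PosSemidef) (h : N ^ 2 = Aᴴ * A) : traceNorm A = N.trace.re := by
  unfold traceNorm
  have hP := Matrix.posSemidef_conjTranspose_mul_self A
  have e : CFC.sqrt (Aᴴ * A) = N := by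
    rw [← h]; exact CFC.sqrt_sq N hN.nonneg
  rw [CFC.sqrt_eq_real_sqrt _ hP.nonneg, cfcₙ_eq_cfc, hP.1.cfc_eq] at e
  simp only [Matrix.IsHermitian.cfc, Unitary.conjStarAlgAut_apply] at e
  rw [← e]
  rfl

lemma tensorPow_mul {d : ℕ} (A B : Matrix (Fin d) (Fin d) ℂ) (n : ℕ) :
    tensorPow A n * tensorPow B n = tensorPow (A * B) n := by
  ext x y
  simp only [tensorPow, Matrix.mul_apply, Matrix.of_apply, ← Finset.prod_mul_distrib]
  rw [← Fintype.piFinset_univ]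
  exact (Finset.prod_univ_sum (fun _ : Fin n => (Finset.univ : Finset (Fin d)))
    (fun t s => A (x t) s * B s (y t))).symm

lemma tensorPow_conjTranspose {d : ℕ} (A : Matrix (Fin d) (Fin d) ℂ) (n : ℕ) :
    (tensorPow A n)ᴴ = tensorPow Aᴴ n := by
  ext x y
  simp [tensorPow, Matrix.conjTranspose_apply, map_prod]

lemma tensorPow_smul {d : ℕ} (c : ℂ) (A : Matrix (Fin d) (Fin d) ℂ) (n : ℕ) :
    tensorPow (c • A) n = c ^ n • tensorPow A n := by
  ext x y
  simp [tensorPow, Finset.prod_mul_distrib]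

lemma tensorPow_one {d : ℕ} (n : ℕ) : tensorPow (1 : Matrix (Fin d) (Fin d) ℂ) n = 1 := by
  ext x y
  simp only [tensorPow, Matrix.of_apply, Matrix.one_apply, Finset.prod_boole]
  simp [funext_iff]

lemma psd_smul_one {m : Type*} [Fintype m] [DecidableEq m] (r : ℝ) (hr : 0 ≤ r) :
    Matrix.PosSemidef ((r : ℂ) • (1 : Matrix m m ℂ)) := by
  exact Matrix.PosSemidef.one.smul (Complex.zero_le_real.mpr hr)

lemma trace_tensorPow_allones (n : ℕ) (B : Matrix (Fin 2) (Fin 2) ℂ)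
    (hBone : ∀ i j, B i j = 1) : (tensorPow B n).trace = (2 : ℂ) ^ n := by
  simp only [Matrix.trace, Matrix.diag_apply, tensorPow, Matrix.of_apply]
  rw [Finset.sum_congr rfl (fun x _ => by
    rw [Finset.prod_congr rfl (fun t _ => hBone (x t) (x t)), Finset.prod_const_one])]
  simp [Finset.card_univ]

/-- the matrices `A = [[1,1],[1,-1]]` and `B = [[1,1],[1,1]]` and their
tensor powers. -/
theorem hadamard_matrix_tensor_powers :
    traceNorm (!![1, 1; 1, -1] : Matrix (Fin 2) (Fin 2) ℂ) = 2 * Real.sqrt 2 ∧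
    traceNorm (!![1, 1; 1, 1] : Matrix (Fin 2) (Fin 2) ℂ) = 2 ∧
    (∀ i j, ‖((!![1, 1; 1, -1] : Matrix (Fin 2) (Fin 2) ℂ) i j)‖ ≤
      ((!![1, 1; 1, 1] : Matrix (Fin 2) (Fin 2) ℂ) i j).re) ∧
    ∀ n : ℕ, 1 ≤ n →
      (∀ x y : Fin n → Fin 2,
        ‖(tensorPow (!![1, 1; 1, -1]) n x y)‖ ≤ (tensorPow (!![1, 1; 1, 1]) n x y).re) ∧
      traceNorm (tensorPow (!![1, 1; 1, -1]) n) = (2 * Real.sqrt 2) ^ n ∧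
      (2 * Real.sqrt 2) ^ n = (2 : ℝ) ^ ((n : ℝ) / 2) * traceNorm (tensorPow (!![1, 1; 1, 1]) n) := by
  set A : Matrix (Fin 2) (Fin 2) ℂ := !![1, 1; 1, -1] with hA
  set B : Matrix (Fin 2) (Fin 2) ℂ := !![1, 1; 1, 1] with hB
  set C : Matrix (Fin 2) (Fin 2) ℂ := !![1, 1; 0, 0] with hC
  have hAA : Aᴴ * A = (2 : ℂ) • 1 := by
    ext i j; fin_cases i <;> fin_cases j <;>
      norm_num [hA, Matrix.mul_apply, Fin.sum_univ_two, Matrix.one_apply]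
  have hBherm : Bᴴ = B := by
    ext i j; fin_cases i <;> fin_cases j <;> simp [hB]
  have hBfac : B = Cᴴ * C := by
    ext i j; fin_cases i <;> fin_cases j <;>
      simp [hB, hC, Matrix.mul_apply, Fin.sum_univ_two]
  have habsA : ∀ i j, ‖A i j‖ = 1 := by
    intro i j; fin_cases i <;> fin_cases j <;> simp [hA]
  have hBone : ∀ i j, B i j = 1 := by
    intro i j; fin_cases i <;> fin_cases j <;> simp [hB]
  have hsq2 : ((Real.sqrt 2 : ℝ) : ℂ) ^ 2 = 2 := by
    push_cast [← Complex.ofReal_pow]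
    norm_num [Real.sq_sqrt]
  refine ⟨?_, ?_, ?_, ?_⟩
  · -- traceNorm A = 2√2
    rw [traceNorm_eq_of_sq A (((Real.sqrt 2 : ℝ) : ℂ) • 1)
      (psd_smul_one _ (Real.sqrt_nonneg 2)) (by rw [hAA, smul_pow, one_pow, hsq2])]
    simp [Matrix.trace_smul, Matrix.trace_one]
    ring
  · -- traceNorm B = 2
    rw [traceNorm_eq_of_sq B B (hBfac ▸ Matrix.posSemidef_conjTranspose_mul_self C)
      (by rw [hBherm, pow_two])]
    simp [Matrix.trace_fin_two, hBone]
    norm_num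
  · intro i j; fin_cases i <;> fin_cases j <;> simp [hA, hB]
  · intro n _
    refine ⟨?_, ?_, ?_⟩
    · intro x y
      simp only [tensorPow, Matrix.of_apply, norm_prod]
      rw [Finset.prod_congr rfl (fun t _ => habsA (x t) (y t)), Finset.prod_const_one,
        Finset.prod_congr rfl (fun t _ => hBone (x t) (y t)), Finset.prod_const_one]
      simp
    · -- traceNorm (tensorPow A n) = (2√2)^n
      have hsqpow : (((Real.sqrt 2 ^ n : ℝ)) : ℂ) ^ 2 = 2 ^ n := by
        push_cast
        rw [← pow_mul, mul_comm n 2, pow_mul, hsq2]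
      rw [traceNorm_eq_of_sq _ (((Real.sqrt 2 ^ n : ℝ) : ℂ) • 1)
        (psd_smul_one _ (pow_nonneg (Real.sqrt_nonneg 2) n))
        (by rw [tensorPow_conjTranspose, tensorPow_mul, hAA, tensorPow_smul, tensorPow_one,
          smul_pow, one_pow, hsqpow])]
      rw [Matrix.trace_smul, Matrix.trace_one, smul_eq_mul]
      have hcard : (Fintype.card (Fin n → Fin 2) : ℂ) = ((2 ^ n : ℝ) : ℂ) := by
        norm_num
      rw [hcard, ← Complex.ofReal_mul, Complex.ofReal_re, mul_pow]
      ring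
    · -- final
      have hBtn : traceNorm (tensorPow B n) = 2 ^ n := by
        have hpsd : (tensorPow B n).PosSemidef := by
          have h1 : tensorPow B n = (tensorPow C n)ᴴ * tensorPow C n := by
            rw [tensorPow_conjTranspose, tensorPow_mul, ← hBfac]
          rw [h1]; exact Matrix.posSemidef_conjTranspose_mul_self _
        rw [traceNorm_eq_of_sq _ (tensorPow B n) hpsd
          (by rw [tensorPow_conjTranspose, hBherm, pow_two])]
        rw [trace_tensorPow_allones n B hBone,
          show ((2 : ℂ) ^ n) = (((2 : ℝ) ^ n : ℝ) : ℂ) by push_cast; ring,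
          Complex.ofReal_re]
      rw [hBtn]
      have h2 : (2 : ℝ) ^ ((n : ℝ) / 2) = Real.sqrt 2 ^ n := by
        rw [Real.sqrt_eq_rpow, ← Real.rpow_natCast ((2:ℝ) ^ ((1:ℝ)/2)) n,
          ← Real.rpow_mul (by norm_num)]
        congr 1
        ring
      rw [h2, mul_pow]
      ring
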